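/- Let ε ∈ (0,1) and set Ω = √(ln(ε^{−2})) = √(2 ln(1/ε)). Let ā, a¹,…,a^L ∈ ℝⁿ and h̄, h¹,…,h^L ∈ ℝ, and suppose x ∈ ℝⁿ satisfies Ω·√(Σ_{ℓ=1}^L ((a^ℓ)ᵀx − h^ℓ)²) ≤ h̄ − āᵀx. Then for EVERY probability distribution of a random vector ζ = (ζ₁,…,ζ_L) whose coordinates are independent, have mean zero, and take values in [−1,1] almost surely, one has Prob{ āᵀx + Σ_{ℓ=1}^L ζ_ℓ (a^ℓ)ᵀx > h̄ + Σ_{ℓ=1}^L ζ_ℓ h^ℓ } ≤ ε. -/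

import Mathlib

open MeasureTheory ProbabilityTheory

lemma mgf_bound_aux {α : Type} [MeasurableSpace α] {μ : Measure α} [IsProbabilityMeasure μ]
    {X : α → ℝ} (hX : Measurable X) (hm : ∫ ω, X ω ∂μ = 0)
    (hb : ∀ᵐ ω ∂μ, X ω ∈ Set.Icc (-1 : ℝ) 1) (s : ℝ) :
    mgf X μ s ≤ Real.exp (s ^ 2 / 2) := by
  have hXint : Integrable X μ := by
    refine Integrable.mono' (integrable_const (1 : ℝ)) hX.aestronglyMeasurable ?_
    filter_upwards [hb] with ω hω
    rw [Real.norm_eq_abs, abs_le]; exact ⟨hω.1, hω.2⟩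
  have hint : Integrable (fun ω => Real.exp (s * X ω)) μ := by
    refine Integrable.mono' (integrable_const (Real.exp |s|))
      ((hX.const_mul s).exp.aestronglyMeasurable) ?_
    filter_upwards [hb] with ω hω
    rw [Real.norm_eq_abs, Real.abs_exp, Real.exp_le_exp]
    calc s * X ω ≤ |s * X ω| := le_abs_self _
      _ = |s| * |X ω| := abs_mul _ _
      _ ≤ |s| * 1 :=
          mul_le_mul_of_nonneg_left (abs_le.2 ⟨hω.1, hω.2⟩) (abs_nonneg s)
      _ = |s| := mul_one _
  have key : ∀ᵐ ω ∂μ, Real.exp (s * X ω) ≤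
      (1 - X ω) / 2 * Real.exp (-s) + (1 + X ω) / 2 * Real.exp s := by
    filter_upwards [hb] with ω hω
    have h1 : (0 : ℝ) ≤ (1 - X ω) / 2 := by linarith [hω.2]
    have h2 : (0 : ℝ) ≤ (1 + X ω) / 2 := by linarith [hω.1]
    have hsum : (1 - X ω) / 2 + (1 + X ω) / 2 = 1 := by ring
    have hcv := convexOn_exp.2 (Set.mem_univ (-s)) (Set.mem_univ s) h1 h2 hsum
    have hcv' : Real.exp ((1 - X ω) / 2 * (-s) + (1 + X ω) / 2 * s) ≤
        (1 - X ω) / 2 * Real.exp (-s) + (1 + X ω) / 2 * Real.exp s := by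
      simpa [smul_eq_mul] using hcv
    rw [show s * X ω = (1 - X ω) / 2 * (-s) + (1 + X ω) / 2 * s by ring]
    exact hcv'
  have hfeq : (fun ω => (1 - X ω) / 2 * Real.exp (-s) + (1 + X ω) / 2 * Real.exp s)
      = fun ω => (Real.exp (-s) + Real.exp s) / 2
        + (Real.exp s - Real.exp (-s)) / 2 * X ω := by
    funext ω; ring
  have hcint : Integrable (fun _ : α => (Real.exp (-s) + Real.exp s) / 2) μ :=
    integrable_const _
  have hmint : Integrable (fun ω => (Real.exp s - Real.exp (-s)) / 2 * X ω) μ :=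
    hXint.const_mul _
  have hRint : Integrable
      (fun ω => (1 - X ω) / 2 * Real.exp (-s) + (1 + X ω) / 2 * Real.exp s) μ := by
    rw [hfeq]; exact hcint.add hmint
  have hI : ∫ ω, ((1 - X ω) / 2 * Real.exp (-s) + (1 + X ω) / 2 * Real.exp s) ∂μ
      = Real.cosh s := by
    rw [hfeq, integral_add hcint hmint, integral_const, integral_const_mul, hm]
    simp [Real.cosh_eq]
    ring
  calc mgf X μ s = ∫ ω, Real.exp (s * X ω) ∂μ := rfl
    _ ≤ ∫ ω, ((1 - X ω) / 2 * Real.exp (-s) + (1 + X ω) / 2 * Real.exp s) ∂μ :=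
        integral_mono_ae hint hRint key
    _ = Real.cosh s := hI
    _ ≤ Real.exp (s ^ 2 / 2) := Real.cosh_le_exp_half_sq s

/-- Ambiguous chance constraint: any `x` satisfying the second-order cone constraint
with radius `Ω = √(ln ε⁻²)` satisfies the chance constraint with tolerance `ε`
for EVERY distribution of `ζ` with independent zero-mean coordinates in `[-1,1]`. -/
theorem stmt_2 (L n : ℕ) (ε : ℝ) (hε : ε ∈ Set.Ioo (0 : ℝ) 1)
    (Om : ℝ) (hOm : Om = Real.sqrt (Real.log (1 / ε ^ 2)))
    (abar : Fin n → ℝ) (a : Fin L → Fin n → ℝ) (hbar : ℝ) (h : Fin L → ℝ)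
    (x : Fin n → ℝ)
    (hsocc : Om * Real.sqrt (∑ ℓ, (∑ i, a ℓ i * x i - h ℓ) ^ 2) ≤
      hbar - ∑ i, abar i * x i) :
    ∀ (α : Type) (_ : MeasurableSpace α) (μ : Measure α), IsProbabilityMeasure μ →
      ∀ ζ : Fin L → α → ℝ, (∀ ℓ, Measurable (ζ ℓ)) →
        iIndepFun ζ μ →
        (∀ ℓ, ∫ ω, ζ ℓ ω ∂μ = 0) →
        (∀ ℓ, ∀ᵐ ω ∂μ, ζ ℓ ω ∈ Set.Icc (-1 : ℝ) 1) →
        μ {ω | ∑ i, abar i * x i + ∑ ℓ, ζ ℓ ω * (∑ i, a ℓ i * x i) >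
            hbar + ∑ ℓ, ζ ℓ ω * h ℓ} ≤ ENNReal.ofReal ε := by
  intro α mα μ hμ ζ hζ hind hmean hbd
  obtain ⟨hε0, hε1⟩ := hε
  set c : Fin L → ℝ := fun ℓ => ∑ i, a ℓ i * x i - h ℓ with hc
  set t0 : ℝ := hbar - ∑ i, abar i * x i with ht0
  set σ : ℝ := Real.sqrt (∑ ℓ, c ℓ ^ 2) with hσ
  have hσ0 : 0 ≤ σ := Real.sqrt_nonneg _
  have hOm0 : 0 ≤ Om := hOm ▸ Real.sqrt_nonneg _
  have hOmsq : Om ^ 2 = Real.log (1 / ε ^ 2) := by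
    rw [hOm, Real.sq_sqrt]
    apply Real.log_nonneg
    rw [le_div_iff₀ (by positivity)]
    nlinarith
  have hsocc' : Om * σ ≤ t0 := hsocc
  have ht00 : 0 ≤ t0 := le_trans (by positivity) hsocc'
  set Y : Fin L → α → ℝ := fun ℓ ω => c ℓ * ζ ℓ ω with hY
  set S : α → ℝ := ∑ ℓ, Y ℓ with hS
  have hSval : ∀ ω, S ω = ∑ ℓ, c ℓ * ζ ℓ ω := fun ω => by
    simp [hS, hY, Finset.sum_apply]
  have hsub : {ω | ∑ i, abar i * x i + ∑ ℓ, ζ ℓ ω * (∑ i, a ℓ i * x i) >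
      hbar + ∑ ℓ, ζ ℓ ω * h ℓ} ⊆ {ω | t0 < S ω} := by
    intro ω hw
    simp only [Set.mem_setOf_eq] at hw ⊢
    rw [hSval]
    have : ∑ ℓ, c ℓ * ζ ℓ ω
        = ∑ ℓ, ζ ℓ ω * (∑ i, a ℓ i * x i) - ∑ ℓ, ζ ℓ ω * h ℓ := by
      rw [← Finset.sum_sub_distrib]
      exact Finset.sum_congr rfl fun ℓ _ => by simp only [hc]; ring
    rw [this, ht0]
    linarith
  refine le_trans (measure_mono hsub) ?_
  by_cases hσz : (∑ ℓ, c ℓ ^ 2) = 0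
  · have hcz : ∀ ℓ, c ℓ = 0 := fun ℓ =>
      pow_eq_zero_iff two_ne_zero |>.1 ((Finset.sum_eq_zero_iff_of_nonneg
        (fun i _ => sq_nonneg (c i))).1 hσz ℓ (Finset.mem_univ ℓ))
    have : {ω | t0 < S ω} = ∅ := by
      ext ω
      simp only [Set.mem_setOf_eq, Set.mem_empty_iff_false, iff_false, not_lt, hSval ω]
      rw [Finset.sum_eq_zero fun ℓ _ => by rw [hcz ℓ, zero_mul]]
      exact ht00
    rw [this]
    simp [hε0.le]
  · have hσpos : 0 < σ := Real.sqrt_pos.2 (lt_of_le_of_ne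
      (Finset.sum_nonneg fun i _ => sq_nonneg _) (Ne.symm hσz))
    set t : ℝ := Om / σ with htdef
    have htn : 0 ≤ t := div_nonneg hOm0 hσ0
    have hYmeas : ∀ ℓ, Measurable (Y ℓ) := fun ℓ => (hζ ℓ).const_mul _
    have hYind : iIndepFun Y μ :=
      hind.comp (fun ℓ => fun v => c ℓ * v) (fun ℓ => measurable_const_mul _)
    have hmgfY : ∀ ℓ s, mgf (Y ℓ) μ s = mgf (ζ ℓ) μ (s * c ℓ) := by
      intro ℓ s
      unfold mgf
      exact integral_congr_ae (Filter.Eventually.of_forall fun ω => by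
        simp only [hY]; ring_nf)
    have hYint : ∀ ℓ, Integrable (fun ω => Real.exp (t * Y ℓ ω)) μ := by
      intro ℓ
      refine Integrable.mono' (integrable_const (Real.exp (|t * c ℓ|)))
        (((hYmeas ℓ).const_mul t).exp.aestronglyMeasurable) ?_
      filter_upwards [hbd ℓ] with ω hω
      rw [Real.norm_eq_abs, Real.abs_exp, Real.exp_le_exp]
      calc t * Y ℓ ω = (t * c ℓ) * ζ ℓ ω := by simp only [hY]; ring
        _ ≤ |(t * c ℓ) * ζ ℓ ω| := le_abs_self _
        _ = |t * c ℓ| * |ζ ℓ ω| := abs_mul _ _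
        _ ≤ |t * c ℓ| * 1 :=
            mul_le_mul_of_nonneg_left (abs_le.2 ⟨hω.1, hω.2⟩) (abs_nonneg _)
        _ = |t * c ℓ| := mul_one _
    have hSint : Integrable (fun ω => Real.exp (t * S ω)) μ := by
      have := hYind.integrable_exp_mul_sum hYmeas (s := Finset.univ) fun ℓ _ => hYint ℓ
      simpa [hS] using this
    have hchern := measure_ge_le_exp_mul_mgf (μ := μ) (X := S) t0 htn hSint
    have hmgfS : mgf S μ t ≤ Real.exp (t ^ 2 * σ ^ 2 / 2) := by
      rw [hS, hYind.mgf_sum hYmeas]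
      have hσ2 : σ ^ 2 = ∑ ℓ, c ℓ ^ 2 := Real.sq_sqrt
        (Finset.sum_nonneg fun i _ => sq_nonneg _)
      calc ∏ ℓ, mgf (Y ℓ) μ t ≤ ∏ ℓ, Real.exp ((t * c ℓ) ^ 2 / 2) := by
            refine Finset.prod_le_prod (fun ℓ _ => mgf_nonneg) (fun ℓ _ => ?_)
            rw [hmgfY]
            exact mgf_bound_aux (hζ ℓ) (hmean ℓ) (hbd ℓ) _
        _ = Real.exp (∑ ℓ, (t * c ℓ) ^ 2 / 2) := by rw [Real.exp_sum]
        _ = Real.exp (t ^ 2 * σ ^ 2 / 2) := by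
            congr 1
            rw [hσ2, Finset.mul_sum, ← Finset.sum_div]
            congr 1
            exact Finset.sum_congr rfl fun ℓ _ => mul_pow t (c ℓ) 2
    have hfinal : (μ {ω | t0 ≤ S ω}).toReal ≤ ε := by
      have h1 : Real.exp (-t * t0) * mgf S μ t ≤
          Real.exp (-t * t0) * Real.exp (t ^ 2 * σ ^ 2 / 2) :=
        mul_le_mul_of_nonneg_left hmgfS (Real.exp_nonneg _)
      have ht2 : t ^ 2 * σ ^ 2 = Om ^ 2 := by
        rw [htdef]; field_simp
      have ht3 : -t * t0 ≤ -Om ^ 2 := by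
        have : t * (Om * σ) ≤ t * t0 := mul_le_mul_of_nonneg_left hsocc' htn
        have ht4 : t * (Om * σ) = Om ^ 2 := by
          rw [htdef]; field_simp
        linarith
      have h2 : Real.exp (-t * t0) * Real.exp (t ^ 2 * σ ^ 2 / 2) ≤
          Real.exp (-Om ^ 2 / 2) := by
        rw [← Real.exp_add, Real.exp_le_exp, ht2]
        calc -t * t0 + Om ^ 2 / 2 ≤ -Om ^ 2 + Om ^ 2 / 2 := add_le_add_left ht3 _
          _ = -Om ^ 2 / 2 := by ring
      have h3 : Real.exp (-Om ^ 2 / 2) = ε := by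
        have hlog : -Real.log (1 / ε ^ 2) / 2 = Real.log ε := by
          rw [one_div, Real.log_inv, Real.log_pow]
          push_cast
          ring
        rw [hOmsq, hlog]
        exact Real.exp_log hε0
      calc (μ {ω | t0 ≤ S ω}).toReal ≤ Real.exp (-t * t0) * mgf S μ t := hchern
        _ ≤ ε := by rw [← h3]; exact le_trans h1 h2
    calc μ {ω | t0 < S ω} ≤ μ {ω | t0 ≤ S ω} :=
          measure_mono (Set.setOf_subset_setOf.2 fun ω hw => le_of_lt hw)
      _ ≤ ENNReal.ofReal ε := by
          rw [ENNReal.le_ofReal_iff_toReal_le (measure_ne_top _ _) hε0.le]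
          exact hfinal
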